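/- Let R be a d×d real symmetric positive definite matrix with eigendecomposition R = V Λ Vᵀ (V orthogonal, eigenvalues λ_1 ≥ … ≥ λ_d > 0), let δ > 0, and set R_RR = R + δI. Define the objective functions J(x) = ½(x − x_b)ᵀB⁻¹(x − x_b) + ½(y − h(x))ᵀR⁻¹(y − h(x)) and J_RR(x) = ½(x − x_b)ᵀB⁻¹(x − x_b) + ½(y − h(x))ᵀR_RR⁻¹(y − h(x)). Then for every x, J_RR(x) = J(x) − ½(y − h(x))ᵀ V Λ_δ Vᵀ (y − h(x)), where Λ_δ is the diagonal matrix with entries Λ_δ(i,i) = δ/(λ_i(λ_i + δ)). -/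

import Mathlib

open Matrix BigOperators

lemma specinv {d : ℕ} (V : Matrix (Fin d) (Fin d) ℝ) (f : Fin d → ℝ)
    (hV1 : V * Vᵀ = 1) (hV2 : Vᵀ * V = 1) (hf : ∀ i, f i ≠ 0) :
    (V * Matrix.diagonal f * Vᵀ)⁻¹ = V * Matrix.diagonal (fun i => (f i)⁻¹) * Vᵀ := by
  apply Matrix.inv_eq_right_inv
  calc V * Matrix.diagonal f * Vᵀ * (V * Matrix.diagonal (fun i => (f i)⁻¹) * Vᵀ)
      = V * (Matrix.diagonal f * (Vᵀ * V) * Matrix.diagonal (fun i => (f i)⁻¹)) * Vᵀ := by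
        noncomm_ring
    _ = 1 := by
        rw [hV2, Matrix.mul_one, Matrix.diagonal_mul_diagonal]
        have : (fun i => f i * (f i)⁻¹) = fun _ : Fin d => (1:ℝ) := by
          funext i; exact mul_inv_cancel₀ (hf i)
        rw [this, Matrix.diagonal_one, Matrix.mul_one, hV1]

/-- applying ridge regression to the observation error covariance matrix
changes the 3D-Var objective function by subtracting
`½(y − h(x))ᵀ V Λ_δ Vᵀ (y − h(x))`, where `Λ_δ(i,i) = δ/(λᵢ(λᵢ+δ))`. -/
theorem ridge_regression_objective_function_update
    {n d : ℕ} (R V : Matrix (Fin d) (Fin d) ℝ) (lam : Fin d → ℝ)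
    (hV1 : V * Vᵀ = 1) (hV2 : Vᵀ * V = 1)
    (hdec : Antitone lam) (hpos : ∀ i, 0 < lam i)
    (hR : R = V * Matrix.diagonal lam * Vᵀ)
    (δ : ℝ) (hδ : 0 < δ)
    (B : Matrix (Fin n) (Fin n) ℝ) (hB : IsUnit B.det)
    (xb : Fin n → ℝ) (y : Fin d → ℝ) (h : (Fin n → ℝ) → Fin d → ℝ)
    (J JRR : (Fin n → ℝ) → ℝ)
    (hJ : J = fun x => (1 / 2) * ((x - xb) ⬝ᵥ B⁻¹.mulVec (x - xb))
        + (1 / 2) * ((y - h x) ⬝ᵥ R⁻¹.mulVec (y - h x)))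
    (hJRR : JRR = fun x => (1 / 2) * ((x - xb) ⬝ᵥ B⁻¹.mulVec (x - xb))
        + (1 / 2) * ((y - h x) ⬝ᵥ
            (R + δ • (1 : Matrix (Fin d) (Fin d) ℝ))⁻¹.mulVec (y - h x))) :
    ∀ x, JRR x = J x - (1 / 2) * ((y - h x) ⬝ᵥ
      (V * Matrix.diagonal (fun i => δ / (lam i * (lam i + δ))) * Vᵀ).mulVec
        (y - h x)) := by
  intro x
  have hRδ : R + δ • (1 : Matrix (Fin d) (Fin d) ℝ)
      = V * Matrix.diagonal (fun i => lam i + δ) * Vᵀ := by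
    have hdiag : Matrix.diagonal (fun _ : Fin d => δ) = δ • (1 : Matrix (Fin d) (Fin d) ℝ) := by
      ext i j
      by_cases hij : i = j <;> simp [Matrix.diagonal, Matrix.one_apply, hij]
    have h1 : δ • (1 : Matrix (Fin d) (Fin d) ℝ)
        = V * Matrix.diagonal (fun _ : Fin d => δ) * Vᵀ := by
      rw [hdiag, Matrix.mul_smul, Matrix.mul_one, Matrix.smul_mul, hV1]
    rw [hR, h1, ← Matrix.add_mul, ← Matrix.mul_add, Matrix.diagonal_add]
  have hRinv : R⁻¹ = V * Matrix.diagonal (fun i => (lam i)⁻¹) * Vᵀ := by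
    rw [hR]; exact specinv V lam hV1 hV2 (fun i => (hpos i).ne')
  have hRδinv : (R + δ • (1 : Matrix (Fin d) (Fin d) ℝ))⁻¹
      = V * Matrix.diagonal (fun i => (lam i + δ)⁻¹) * Vᵀ := by
    rw [hRδ]; exact specinv V _ hV1 hV2 (fun i => (add_pos (hpos i) hδ).ne')
  have key : (R + δ • (1 : Matrix (Fin d) (Fin d) ℝ))⁻¹
      = R⁻¹ - V * Matrix.diagonal (fun i => δ / (lam i * (lam i + δ))) * Vᵀ := by
    have hd : Matrix.diagonal (fun i => (lam i)⁻¹)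
        - Matrix.diagonal (fun i => δ / (lam i * (lam i + δ)))
        = Matrix.diagonal (fun i => (lam i + δ)⁻¹) := by
      ext i j
      by_cases hij : i = j
      · subst hij
        simp only [Matrix.sub_apply, Matrix.diagonal_apply_eq]
        have h1 : lam i ≠ 0 := (hpos i).ne'
        have h2 : lam i + δ ≠ 0 := (add_pos (hpos i) hδ).ne'
        field_simp
        ring
      · simp [Matrix.diagonal_apply_ne _ hij]
    rw [hRinv, hRδinv, ← Matrix.sub_mul, ← Matrix.mul_sub, hd]
  rw [hJ, hJRR, key]
  simp only [Matrix.sub_mulVec, dotProduct_sub]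
  ring
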